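/- The function φ₂(x) = arctan(1/√x)/√x is GA-convex on (0,∞): for all x₀, x₁ > 0, φ₂(√(x₀x₁)) ≤ (φ₂(x₀) + φ₂(x₁))/2. -/

import Mathlib

open Real

lemma g_deriv (t : ℝ) : HasDerivAt (fun t : ℝ => t * arctan t)
    (arctan t + t * (1 / (1 + t ^ 2))) t := by
  have := (hasDerivAt_id t).fun_mul (hasDerivAt_arctan t)
  simpa [add_comm] using this

lemma g_deriv' (t : ℝ) : HasDerivAt (fun t : ℝ => arctan t + t * (1 / (1 + t ^ 2)))
    (2 / (1 + t ^ 2) ^ 2) t := by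
  have h1 : (0:ℝ) < 1 + t ^ 2 := by positivity
  have h2 : HasDerivAt (fun t : ℝ => t * (1 / (1 + t ^ 2)))
      ((1 * (1 + t ^ 2) - t * (2 * t)) / (1 + t ^ 2) ^ 2) t := by
    have := (hasDerivAt_id t).fun_div (((hasDerivAt_pow 2 t)).const_add 1) h1.ne'
    simpa [mul_one_div, pow_one, div_eq_mul_inv] using this
  have h3 := (hasDerivAt_arctan t).fun_add h2
  refine h3.congr_deriv ?_
  field_simp
  ring

lemma g_convex : ConvexOn ℝ Set.univ (fun t : ℝ => t * arctan t) := by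
  have hderiv : deriv (fun t : ℝ => t * arctan t) =
      fun t => arctan t + t * (1 / (1 + t ^ 2)) := funext fun t => (g_deriv t).deriv
  apply convexOn_of_deriv2_nonneg convex_univ
  · exact fun t _ => (g_deriv t).continuousAt.continuousWithinAt
  · exact fun t _ => (g_deriv t).differentiableAt.differentiableWithinAt
  · rw [hderiv]
    exact fun t _ => (g_deriv' t).differentiableAt.differentiableWithinAt
  · intro t _
    have h : deriv^[2] (fun t : ℝ => t * arctan t) t = 2 / (1 + t ^ 2) ^ 2 := by
      rw [Function.iterate_succ, Function.iterate_one, Function.comp_apply, hderiv]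
      exact (g_deriv' t).deriv
    rw [h]; positivity

theorem phi₂_GA_convex (x₀ x₁ : ℝ) (h₀ : 0 < x₀) (h₁ : 0 < x₁) :
    Real.arctan (1 / Real.sqrt (Real.sqrt (x₀ * x₁))) / Real.sqrt (Real.sqrt (x₀ * x₁)) ≤
      (Real.arctan (1 / Real.sqrt x₀) / Real.sqrt x₀ +
        Real.arctan (1 / Real.sqrt x₁) / Real.sqrt x₁) / 2 := by
  have s₀ : (0:ℝ) < Real.sqrt x₀ := Real.sqrt_pos.mpr h₀
  have s₁ : (0:ℝ) < Real.sqrt x₁ := Real.sqrt_pos.mpr h₁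
  set a : ℝ := 1 / Real.sqrt x₀ with ha
  set b : ℝ := 1 / Real.sqrt x₁ with hb
  have hA : 0 < a := by positivity
  have hB : 0 < b := by positivity
  have hm : Real.sqrt (a * b) = 1 / Real.sqrt (Real.sqrt (x₀ * x₁)) := by
    rw [ha, hb, div_mul_div_comm, one_mul, one_div, one_div, Real.sqrt_inv,
      Real.sqrt_mul h₀.le, Real.sqrt_mul s₀.le]
  set m : ℝ := Real.sqrt (a * b) with hmdef
  have hM : 0 < m := Real.sqrt_pos.mpr (by positivity)
  -- AM-GM
  have amgm : m ≤ (a + b) / 2 := by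
    have hsq : m ^ 2 = a * b := Real.sq_sqrt (by positivity)
    nlinarith [sq_nonneg (a - b), sq_nonneg (m - (a + b) / 2)]
  -- monotonicity of g on [0, ∞)
  have mono : m * arctan m ≤ ((a + b) / 2) * arctan ((a + b) / 2) :=
    mul_le_mul amgm (Real.arctan_strictMono.monotone amgm)
      (by rw [← Real.arctan_zero]; exact Real.arctan_strictMono.monotone hM.le) (by positivity)
  -- convexity (midpoint)
  have conv : ((a + b) / 2) * arctan ((a + b) / 2) ≤ (a * arctan a + b * arctan b) / 2 := by
    have h := g_convex.2 (Set.mem_univ a) (Set.mem_univ b)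
      (by norm_num : (0:ℝ) ≤ 1/2) (by norm_num : (0:ℝ) ≤ 1/2) (by norm_num)
    simp only [smul_eq_mul] at h
    calc ((a + b) / 2) * arctan ((a + b) / 2)
        = (1/2 * a + 1/2 * b) * arctan (1/2 * a + 1/2 * b) := by ring_nf
      _ ≤ 1/2 * (a * arctan a) + 1/2 * (b * arctan b) := h
      _ = (a * arctan a + b * arctan b) / 2 := by ring
  have key : m * arctan m ≤ (a * arctan a + b * arctan b) / 2 := mono.trans conv
  -- translate the goal
  have e0 : Real.arctan (1 / Real.sqrt (Real.sqrt (x₀ * x₁))) / Real.sqrt (Real.sqrt (x₀ * x₁))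
      = m * arctan m := by
    rw [← hm]
    have hs : Real.sqrt (Real.sqrt (x₀ * x₁)) = 1 / m := by
      rw [hm]; field_simp
    rw [hs]
    field_simp
  have e1 : Real.arctan (1 / Real.sqrt x₀) / Real.sqrt x₀ = a * arctan a := by
    rw [← ha, ha, one_div, div_eq_mul_inv, mul_comm]
  have e2 : Real.arctan (1 / Real.sqrt x₁) / Real.sqrt x₁ = b * arctan b := by
    rw [← hb, hb, one_div, div_eq_mul_inv, mul_comm]
  rw [e0, e1, e2]
  exact key
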